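/- arXiv:1305.0057 — 3 statements merged into one kernel-verified Lean document; each statement's English description precedes it below -/
import Mathlib

section
/- Let a, b, c be three roots in a reduced root system Φ, no two of which are opposite, such that a + b + c ∈ Φ ∪ {0} and (a + b) + c is a root when a + b is. If (a + b) + c is a root of Φ, then at least one of a + c and b + c is a root of Φ. (Equivalently: if x, y, z ∈ Φ are pairwise non-opposite and x + y + z ∈ Φ, then x + y ∈ Φ or y + z ∈ Φ or x + z ∈ Φ.) -/
open scoped RealInnerProductSpace

/-- A reduced root system `Φ` with a fixed base (system of simple roots) `base`
in a real inner product space. -/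
structure RootSystemData (V : Type) [NormedAddCommGroup V] [InnerProductSpace ℝ V] where
  Φ : Set V
  base : Finset V
  finite : Φ.Finite
  zero_notMem : (0:V) ∉ Φ
  neg_mem : ∀ a ∈ Φ, -a ∈ Φ
  reduced : ∀ a ∈ Φ, ∀ t : ℝ, t • a ∈ Φ → t = 1 ∨ t = -1
  reflect_mem : ∀ a ∈ Φ, ∀ b ∈ Φ, b - (2 * (inner ℝ a b : ℝ) / (inner ℝ a a : ℝ)) • a ∈ Φ
  cartan_int : ∀ a ∈ Φ, ∀ b ∈ Φ, ∃ n : ℤ, 2 * (inner ℝ a b : ℝ) / (inner ℝ a a : ℝ) = (n : ℝ)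
  base_sub : ↑base ⊆ Φ
  base_indep : LinearIndependent ℝ (fun b : base => (b : V))
  base_gen : ∀ a ∈ Φ,
    (∃ c : V → ℕ, a = ∑ b ∈ base, c b • b) ∨ (∃ c : V → ℕ, -a = ∑ b ∈ base, c b • b)

namespace RootSystemData

variable {V : Type} [NormedAddCommGroup V] [InnerProductSpace ℝ V] (RS : RootSystemData V)

/-- `a` is a nonnegative integral combination of the simple roots. -/
def IsPos (a : V) : Prop := ∃ c : V → ℕ, a = ∑ b ∈ RS.base, c b • b

/-- The quotient space `V / ⟨Π ∖ J⟩`, ambient space of the relative roots. -/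
abbrev Qspace (J : Finset V) : Type :=
  V ⧸ Submodule.span ℝ ((RS.base : Set V) \ (J : Set V))

/-- The canonical projection `π : V → V / ⟨Π ∖ J⟩`. -/
def proj (J : Finset V) : V →ₗ[ℝ] RS.Qspace J :=
  Submodule.mkQ _

/-- The set of relative roots `Φ_J = π(Φ) ∖ {0}`. -/
def relRoots (J : Finset V) : Set (RS.Qspace J) := (RS.proj J '' RS.Φ) \ {0}

/-- `β` is a simple relative root: a nonzero image of a simple root in `J`. -/
def IsSimpleRel (J : Finset V) (β : RS.Qspace J) : Prop :=
  β ≠ 0 ∧ ∃ b ∈ J, β = RS.proj J b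

/-- `β` is a positive relative root: a relative root that is a nonnegative
integral combination of the simple relative roots. -/
def IsPosRel (J : Finset V) (β : RS.Qspace J) : Prop :=
  β ∈ RS.relRoots J ∧ ∃ c : V → ℕ, β = ∑ b ∈ J, c b • RS.proj J b

/-- `a` is maximal in `S` with respect to the base `Π`. -/
def IsMaximalIn (S : Set V) (a : V) : Prop := a ∈ S ∧ ∀ b ∈ RS.base, a + b ∉ S

/-- `a` is minimal in `S` with respect to the base `Π`. -/
def IsMinimalIn (S : Set V) (a : V) : Prop := a ∈ S ∧ ∀ b ∈ RS.base, a - b ∉ S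

/-- `a` is the highest root: every root is obtained from it by subtracting a
nonnegative combination of simple roots. -/
def IsHighest (a : V) : Prop :=
  a ∈ RS.Φ ∧ ∀ b ∈ RS.Φ, ∃ c : V → ℕ, a - b = ∑ x ∈ RS.base, c x • x

/-- `S` is an irreducible component of `Φ`: a nonempty subset orthogonal to its
complement admitting no further nontrivial orthogonal splitting. -/
def IsComponent (S : Set V) : Prop :=
  S ⊆ RS.Φ ∧ S.Nonempty ∧ (∀ a ∈ S, ∀ b ∈ RS.Φ \ S, (inner ℝ a b : ℝ) = 0) ∧
    ∀ T ⊆ S, T.Nonempty → (∀ a ∈ T, ∀ b ∈ RS.Φ \ T, (inner ℝ a b : ℝ) = 0) → T = S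

/-- The root system is irreducible. -/
def Irred : Prop := RS.IsComponent RS.Φ

end RootSystemData


private lemma inner_self_pos' {V : Type} [NormedAddCommGroup V] [InnerProductSpace ℝ V]
    {a : V} (ha : a ≠ 0) : (0:ℝ) < inner ℝ a a := by
  rw [real_inner_self_eq_norm_mul_norm]
  exact mul_pos (norm_pos_iff.mpr ha) (norm_pos_iff.mpr ha)

private lemma sub_mem_of_inner_pos {V : Type} [NormedAddCommGroup V] [InnerProductSpace ℝ V]
    (RS : RootSystemData V) {a b : V} (ha : a ∈ RS.Φ) (hb : b ∈ RS.Φ)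
    (hip : 0 < (inner ℝ a b : ℝ)) (hne : a ≠ b) : a - b ∈ RS.Φ := by
  have ha0 : a ≠ 0 := fun h => RS.zero_notMem (h ▸ ha)
  have hb0 : b ≠ 0 := fun h => RS.zero_notMem (h ▸ hb)
  have haa : (0:ℝ) < inner ℝ a a := inner_self_pos' ha0
  have hbb : (0:ℝ) < inner ℝ b b := inner_self_pos' hb0
  obtain ⟨n, hn⟩ := RS.cartan_int a ha b hb
  obtain ⟨m, hm⟩ := RS.cartan_int b hb a ha
  have hna : ‖b‖ • a ≠ ‖a‖ • b := by
    intro h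
    have hnorma : (0:ℝ) < ‖a‖ := norm_pos_iff.mpr ha0
    have hba : b = (‖b‖ / ‖a‖) • a := by
      have h2 : (‖b‖ / ‖a‖) • a = (‖a‖⁻¹) • (‖b‖ • a) := by
        rw [smul_smul, div_eq_inv_mul]
      rw [h2, h, smul_smul, inv_mul_cancel₀ (ne_of_gt hnorma), one_smul]
    have := RS.reduced a ha (‖b‖ / ‖a‖) (hba ▸ hb)
    have hpos : (0:ℝ) < ‖b‖ / ‖a‖ := div_pos (norm_pos_iff.mpr hb0) hnorma
    rcases this with h1 | h1
    · exact hne (by rw [hba, h1, one_smul])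
    · rw [h1] at hpos; norm_num at hpos
  have hcs : (inner ℝ a b : ℝ) < ‖a‖ * ‖b‖ := inner_lt_norm_mul_iff_real.mpr hna
  have hcs2 : (inner ℝ a b : ℝ) * (inner ℝ a b : ℝ) < (inner ℝ a a : ℝ) * (inner ℝ b b : ℝ) := by
    have h1 : (inner ℝ a b : ℝ) * (inner ℝ a b : ℝ) < (‖a‖ * ‖b‖) * (‖a‖ * ‖b‖) := by
      apply mul_lt_mul' (le_of_lt hcs) hcs (le_of_lt hip)
      exact mul_pos (norm_pos_iff.mpr ha0) (norm_pos_iff.mpr hb0)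
    calc (inner ℝ a b : ℝ) * (inner ℝ a b : ℝ) < (‖a‖ * ‖b‖) * (‖a‖ * ‖b‖) := h1
      _ = (inner ℝ a a : ℝ) * (inner ℝ b b : ℝ) := by
          rw [real_inner_self_eq_norm_mul_norm, real_inner_self_eq_norm_mul_norm]; ring
  have hsymm : (inner ℝ b a : ℝ) = (inner ℝ a b : ℝ) := (real_inner_comm b a).symm
  have hn1 : (1:ℝ) ≤ n := by
    have : (0:ℝ) < (n:ℝ) := by rw [← hn]; exact div_pos (by linarith) haa
    exact_mod_cast (by exact_mod_cast this : (0:ℤ) < n)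
  have hm1 : (1:ℝ) ≤ m := by
    have : (0:ℝ) < (m:ℝ) := by rw [← hm, hsymm]; exact div_pos (by linarith) hbb
    exact_mod_cast (by exact_mod_cast this : (0:ℤ) < m)
  have hprod : (n:ℝ) * (m:ℝ) < 4 := by
    rw [← hn, ← hm, hsymm, div_mul_div_comm, div_lt_iff₀ (mul_pos haa hbb)]
    nlinarith
  have hnm : n = 1 ∨ m = 1 := by
    have h4 : (n:ℤ) * m < 4 := by exact_mod_cast hprod
    have hn' : (1:ℤ) ≤ n := by exact_mod_cast hn1
    have hm' : (1:ℤ) ≤ m := by exact_mod_cast hm1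
    by_contra hc
    push_neg at hc
    have : (2:ℤ) ≤ n := by omega
    have : (2:ℤ) ≤ m := by omega
    nlinarith
  rcases hnm with h1 | h1
  · have := RS.reflect_mem a ha b hb
    rw [hn, h1] at this
    simp only [Int.cast_one, one_smul] at this
    have := RS.neg_mem _ this
    simpa using this
  · have := RS.reflect_mem b hb a ha
    rw [hm, h1] at this
    simpa using this

open RootSystemData in
theorem stmt11 {V : Type} [NormedAddCommGroup V] [InnerProductSpace ℝ V]
    (RS : RootSystemData V) (x y z : V)
    (hx : x ∈ RS.Φ) (hy : y ∈ RS.Φ) (hz : z ∈ RS.Φ)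
    (hxy : x ≠ -y) (hyz : y ≠ -z) (hxz : x ≠ -z)
    (hsum : x + y + z ∈ RS.Φ) :
    x + y ∈ RS.Φ ∨ y + z ∈ RS.Φ ∨ x + z ∈ RS.Φ := by
  set s := x + y + z with hs
  have hs0 : s ≠ 0 := fun h => RS.zero_notMem (h ▸ hsum)
  have hss : (0:ℝ) < inner ℝ s s := inner_self_pos' hs0
  have hsplit : (inner ℝ s x : ℝ) + (inner ℝ s y : ℝ) + (inner ℝ s z : ℝ) = (inner ℝ s s : ℝ) := by
    conv_rhs => rw [hs]
    rw [inner_add_right, inner_add_right]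
  have hone : (0:ℝ) < inner ℝ s x ∨ (0:ℝ) < inner ℝ s y ∨ (0:ℝ) < inner ℝ s z := by
    by_contra hc
    push_neg at hc
    linarith [hc.1, hc.2.1, hc.2.2]
  rcases hone with h | h | h
  · have hne : s ≠ x := by
      intro h'
      rw [hs] at h'
      have h2 : x + (y + z) = x + 0 := by rw [add_zero, ← add_assoc]; exact h'
      exact hyz (eq_neg_of_add_eq_zero_left (add_left_cancel h2))
    have := sub_mem_of_inner_pos RS hsum hx h hne
    have heq : s - x = y + z := by rw [hs]; abel
    rw [heq] at this
    exact Or.inr (Or.inl this)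
  · have hne : s ≠ y := by
      intro h'
      rw [hs] at h'
      have h2 : y + (x + z) = y + 0 := by
        rw [add_zero]
        rw [show y + (x + z) = x + y + z by abel]
        exact h'
      exact hxz (eq_neg_of_add_eq_zero_left (add_left_cancel h2))
    have := sub_mem_of_inner_pos RS hsum hy h hne
    have heq : s - y = x + z := by rw [hs]; abel
    rw [heq] at this
    exact Or.inr (Or.inr this)
  · have hne : s ≠ z := by
      intro h'
      rw [hs] at h'
      have h2 : z + (x + y) = z + 0 := by
        rw [add_zero]
        rw [show z + (x + y) = x + y + z by abel]
        exact h'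
      exact hxy (eq_neg_of_add_eq_zero_left (add_left_cancel h2))
    have := sub_mem_of_inner_pos RS hsum hz h hne
    have heq : s - z = x + y := by rw [hs]; abel
    rw [heq] at this
    exact Or.inl this
end

section
/- Let G be a topological group, Δ a dense subgroup of G, and C a closed subgroup of G. Suppose K ⊆ G is a compact subset with C·K = G (every element of G is a product of an element of C and an element of K), and that K ⊆ Δ. Then C ∩ Δ is dense in C. -/
open Filter Topology


theorem stmt17 {G : Type*} [Group G] [TopologicalSpace G] [IsTopologicalGroup G]
    (Δ C : Subgroup G)
    (hΔ : Dense (Δ : Set G)) (hC : IsClosed (C : Set G))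
    (K : Set G) (hK : IsCompact K) (hKΔ : K ⊆ (Δ : Set G))
    (hCK : ∀ g : G, ∃ c ∈ C, ∃ k ∈ K, g = c * k) :
    (C : Set G) ⊆ closure ((C : Set G) ∩ (Δ : Set G)) := by
  intro c hc
  choose fc hfc fk hfk hfeq using hCK
  -- The filter of points of Δ near c
  have hcl : c ∈ closure (Δ : Set G) := hΔ c
  rw [mem_closure_iff_clusterPt] at hcl
  haveI : (𝓝 c ⊓ Filter.principal (Δ : Set G)).NeBot := hcl
  set L : Filter G := 𝓝 c ⊓ Filter.principal (Δ : Set G) with hL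
  let U : Ultrafilter G := Ultrafilter.of L
  have hUL : (U : Filter G) ≤ L := Ultrafilter.of_le L
  -- fk maps into K, so by compactness the ultrafilter image converges to some k ∈ K
  have hUK : (U.map fk : Filter G) ≤ Filter.principal K := by
    rw [Filter.le_principal_iff, Ultrafilter.coe_map, Filter.mem_map]
    exact Filter.univ_mem' hfk
  obtain ⟨k, hkK, hk⟩ := hK.ultrafilter_le_nhds (U.map fk) hUK
  have htk : Filter.Tendsto fk (U : Filter G) (𝓝 k) := hk
  have htid : Filter.Tendsto id (U : Filter G) (𝓝 c) :=
    (hUL.trans inf_le_left)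
  have hfc' : ∀ g : G, fc g = g * (fk g)⁻¹ := by
    intro g
    exact eq_mul_inv_iff_mul_eq.mpr (hfeq g).symm
  have htfc : Filter.Tendsto fc (U : Filter G) (𝓝 (c * k⁻¹)) := by
    have : Filter.Tendsto (fun g => g * (fk g)⁻¹) (U : Filter G) (𝓝 (c * k⁻¹)) :=
      Filter.Tendsto.mul htid htk.inv
    rw [show fc = fun g => g * (fk g)⁻¹ from funext hfc']; exact this
  have hev : ∀ᶠ g in (U : Filter G), fc g ∈ (C : Set G) ∩ (Δ : Set G) := by
    have hmem : ∀ᶠ g in (U : Filter G), g ∈ (Δ : Set G) := by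
      have : (U : Filter G) ≤ Filter.principal (Δ : Set G) := hUL.trans inf_le_right
      exact Filter.le_principal_iff.mp this
    filter_upwards [hmem] with g hg
    refine ⟨hfc g, ?_⟩
    rw [hfc' g]
    exact Δ.mul_mem hg (Δ.inv_mem (hKΔ (hfk g)))
  have hck : c * k⁻¹ ∈ closure ((C : Set G) ∩ (Δ : Set G)) :=
    mem_closure_of_tendsto htfc hev
  -- k ∈ C ∩ Δ
  have hckC : c * k⁻¹ ∈ C := by
    have h1 : closure ((C : Set G) ∩ (Δ : Set G)) ⊆ closure (C : Set G) :=
      closure_mono Set.inter_subset_left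
    have := h1 hck
    rwa [hC.closure_eq] at this
  have hkC : k ∈ C := by
    have : (c * k⁻¹)⁻¹ * c ∈ C := C.mul_mem (C.inv_mem hckC) hc
    simpa [mul_assoc] using this
  have hkD : k ∈ (C : Set G) ∩ (Δ : Set G) := ⟨hkC, hKΔ hkK⟩
  -- conclude using that the closure of the subgroup C ⊓ Δ is a subgroup
  have hset : (C : Set G) ∩ (Δ : Set G) = ((C ⊓ Δ : Subgroup G) : Set G) := rfl
  rw [hset] at hck hkD ⊢
  have : c = (c * k⁻¹) * k := by group
  rw [this]
  have h1 : c * k⁻¹ ∈ (C ⊓ Δ : Subgroup G).topologicalClosure := hck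
  have h2 : k ∈ (C ⊓ Δ : Subgroup G).topologicalClosure := subset_closure hkD
  exact mul_mem h1 h2
end

section
/- Let R be a commutative ring, V a finitely generated faithfully projective R-module, and M ⊆ V a submodule that is invariant under all R-linear endomorphisms of V (i.e., f(M) ⊆ M for every f ∈ End_R(V)). Then there exists an ideal I of R such that M = I·V. -/
theorem stmt19 {R V : Type*} [CommRing R] [AddCommGroup V] [Module R V]
    [Module.Finite R V] [Module.Projective R V] [FaithfulSMul R V]
    (M : Submodule R V)
    (hM : ∀ f : V →ₗ[R] V, M.map f ≤ M) :
    ∃ I : Ideal R, M = I • (⊤ : Submodule R V) := by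
  classical
  obtain ⟨n, w, hw⟩ := Module.Finite.exists_fin (R := R) (M := V)
  set π : (Fin n → R) →ₗ[R] V := Fintype.linearCombination R w with hπdef
  have hπ : Function.Surjective π := by
    rw [← LinearMap.range_eq_top, hπdef, Fintype.range_linearCombination, hw]
  obtain ⟨s, hs⟩ := Module.projective_lifting_property π LinearMap.id hπ
  refine ⟨⨆ φ : V →ₗ[R] R, M.map φ, le_antisymm ?_ ?_⟩
  · intro m hm
    have hmeq : ∑ i, s m i • w i = m := by
      have := LinearMap.congr_fun hs m
      simp only [LinearMap.coe_comp, Function.comp_apply, LinearMap.id_apply] at this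
      rw [hπdef, Fintype.linearCombination_apply] at this
      exact this
    rw [← hmeq]
    refine Submodule.sum_mem _ fun i _ => Submodule.smul_mem_smul ?_ trivial
    exact le_iSup (fun φ : V →ₗ[R] R => M.map φ) ((LinearMap.proj i).comp s)
      ⟨m, hm, rfl⟩
  · refine Submodule.smul_le.2 fun r hr v _ => ?_
    have hIle : (⨆ φ : V →ₗ[R] R, M.map φ) ≤ Submodule.colon M ⊤ := by
      refine iSup_le fun φ r hr => ?_
      obtain ⟨m, hm, rfl⟩ := hr
      refine Submodule.mem_colon.2 fun v _ => ?_
      exact hM (LinearMap.smulRight φ v) ⟨m, hm, rfl⟩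
    exact Submodule.mem_colon.1 (hIle hr) v trivial
end
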